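/- For all natural numbers q, m, n with m+n > 0 and every rational x, one has ∑_{j=0}^{m+q} C(m+q, j)·(n+q+j)·B_{n+q+j−1}(x) = −(−1)^{m+n}·∑_{k=0}^{n+q} C(n+q, k)·(m+q+k)·B_{m+q+k−1}(−x). (In any term where the subscript n+q+j−1 or m+q+k−1 would be negative, the multiplying factor n+q+j resp. m+q+k is 0, so the term vanishes and natural-number subtraction in the subscript is harmless.) -/
import Mathlib

open Finset Polynomial

/-- The Bernoulli umbral functional: `X^k ↦ bernoulli k`. -/
noncomputable def Lb : Polynomial ℚ →ₗ[ℚ] ℚ :=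
  Polynomial.lsum fun k => _root_.bernoulli k • LinearMap.id

lemma Lb_monomial (n : ℕ) (a : ℚ) : Lb (monomial n a) = _root_.bernoulli n * a := by
  simp [Lb, Polynomial.lsum_apply, Polynomial.sum_monomial_index, mul_comm]

lemma Lb_C_mul (a : ℚ) (p : Polynomial ℚ) : Lb (C a * p) = a * Lb p := by
  rw [← smul_eq_C_mul, map_smul, smul_eq_mul]

lemma Lb_X_pow (n : ℕ) : Lb (X ^ n) = _root_.bernoulli n := by
  rw [X_pow_eq_monomial, Lb_monomial, mul_one]

lemma key_num (n : ℕ) :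
    (-1 : ℚ) ^ n * ∑ i ∈ range (n + 1), (n.choose i : ℚ) * _root_.bernoulli i
      = _root_.bernoulli n := by
  rw [sum_range_succ, _root_.sum_bernoulli]
  by_cases h : n = 1
  · subst h; norm_num
  · rw [if_neg h, zero_add, Nat.choose_self, Nat.cast_one, one_mul,
      ]
    nth_rewrite 1 [bernoulli_eq_bernoulli'_of_ne_one h]
    rw [bernoulli'_eq_bernoulli, ← mul_assoc, ← mul_pow]
    norm_num

lemma Lb_bernoulli_eval (x : ℚ) (k : ℕ) :
    Lb ((X + C x) ^ k) = (Polynomial.bernoulli k).eval x := by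
  rw [add_pow, map_sum, Polynomial.bernoulli, eval_finset_sum]
  refine Finset.sum_congr rfl fun i _ => ?_
  rw [eval_monomial]
  have : (X ^ i * C x ^ (k - i) * (k.choose i : Polynomial ℚ))
      = C (x ^ (k - i) * (k.choose i : ℚ)) * X ^ i := by
    rw [C_mul, C_pow, C_eq_natCast]
    ring
  rw [this, Lb_C_mul, Lb_X_pow]
  ring

lemma Lb_comp (p : Polynomial ℚ) : Lb (p.comp (-(1 + X))) = Lb p := by
  induction p using Polynomial.induction_on' with
  | add p q hp hq => rw [add_comp, map_add, map_add, hp, hq]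
  | monomial n a =>
    rw [monomial_comp, Lb_monomial]
    have h1 : (-(1 + X) : Polynomial ℚ) ^ n = C ((-1 : ℚ) ^ n) * (X + 1) ^ n := by
      rw [show (-(1 + X) : Polynomial ℚ) = -1 * (X + 1) by ring, mul_pow]
      simp [C_pow]
    rw [h1, ← mul_assoc, ← C_mul, Lb_C_mul]
    have h2 : Lb ((X + 1 : Polynomial ℚ) ^ n)
        = ∑ i ∈ range (n + 1), (n.choose i : ℚ) * _root_.bernoulli i := by
      rw [add_pow, map_sum]
      refine Finset.sum_congr rfl fun i _ => ?_
      have : (X ^ i * (1 : Polynomial ℚ) ^ (n - i) * (n.choose i : Polynomial ℚ))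
          = C ((n.choose i : ℚ)) * X ^ i := by rw [C_eq_natCast]; ring
      rw [this, Lb_C_mul, Lb_X_pow]
    rw [h2]
    linear_combination a * key_num n

lemma Lb_deriv_sum (A B : ℕ) (y : ℚ) :
    Lb (derivative ((X + C y) ^ B * (X + C y + 1) ^ A)) =
      ∑ j ∈ range (A + 1),
        (A.choose j : ℚ) * ((B : ℚ) + j) * (Polynomial.bernoulli (B + j - 1)).eval y := by
  have h : ((X + C y) ^ B * (X + C y + 1) ^ A : Polynomial ℚ)
      = ∑ j ∈ range (A + 1), C (A.choose j : ℚ) * (X + C y) ^ (B + j) := by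
    rw [add_pow (X + C y) 1 A, mul_sum]
    refine Finset.sum_congr rfl fun j _ => ?_
    rw [pow_add, one_pow, C_eq_natCast]
    ring
  rw [h, derivative_sum, map_sum]
  refine Finset.sum_congr rfl fun j _ => ?_
  rw [derivative_C_mul, derivative_pow, derivative_add, derivative_X, derivative_C, add_zero,
    mul_one, ← mul_assoc, ← C_mul, Lb_C_mul, Lb_bernoulli_eval]
  push_cast
  ring

lemma bridge (A B : ℕ) (y : ℚ) :
    Lb (derivative ((X + C (-y)) ^ A * (X + C (-y) + 1) ^ B))
      = -(-1 : ℚ) ^ (A + B) * Lb (derivative ((X + C y) ^ B * (X + C y + 1) ^ A)) := by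
  set p : Polynomial ℚ := (X + C (-y)) ^ A * (X + C (-y) + 1) ^ B with hp
  rw [← Lb_comp (derivative p)]
  have hcomp : (derivative p).comp (-(1 + X)) = -derivative (p.comp (-(1 + X))) := by
    rw [derivative_comp]
    simp
  have hpc : p.comp (-(1 + X))
      = C ((-1 : ℚ) ^ (A + B)) * ((X + C y) ^ B * (X + C y + 1) ^ A) := by
    simp only [hp, mul_comp, pow_comp, add_comp, X_comp, C_comp, one_comp, neg_comp]
    have e1 : ((-(1 + X) : Polynomial ℚ) + C (-y)) = -1 * (X + C y + 1) := by
      rw [map_neg]; ring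
    have e2 : ((-(1 + X) : Polynomial ℚ) + C (-y) + 1) = -1 * (X + C y) := by
      rw [map_neg]; ring
    rw [e2, e1, mul_pow, mul_pow, map_pow, map_neg, map_one]
    ring
  rw [hcomp, map_neg, hpc, derivative_C_mul, Lb_C_mul]
  ring

theorem momiyama_extension (q m n : ℕ) (hmn : 0 < m + n) (x : ℚ) :
    ∑ j ∈ Finset.range (m + q + 1),
      ((m + q).choose j : ℚ) * (n + q + j) * (Polynomial.bernoulli (n + q + j - 1)).eval x
    = -(-1 : ℚ) ^ (m + n) *
        ∑ k ∈ Finset.range (n + q + 1),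
          ((n + q).choose k : ℚ) * (m + q + k) *
            (Polynomial.bernoulli (m + q + k - 1)).eval (-x) := by
  have h1 := Lb_deriv_sum (m + q) (n + q) x
  have h2 := Lb_deriv_sum (n + q) (m + q) (-x)
  have h3 := bridge (m + q) (n + q) x
  push_cast at h1 h2
  rw [← h1, ← h2, h3]
  have he : (-1 : ℚ) ^ (m + q + (n + q)) = (-1 : ℚ) ^ (m + n) := by
    rw [show m + q + (n + q) = m + n + 2 * q by ring, pow_add, pow_mul]
    norm_num
  rw [he]
  have h4 : (-1 : ℚ) ^ (m + n) * (-1 : ℚ) ^ (m + n) = 1 := by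
    rw [← mul_pow]; norm_num
  set L := Lb (derivative ((X + C x) ^ (n + q) * (X + C x + 1) ^ (m + q)))
  linear_combination -L * h4
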